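/- Let A be a commutative semiring and a, b ∈ A. Define R(a,b) = {(ax+by+z, bx+ay+z) : x,y,z ∈ A}. Then R(a,b)₊ = {(u,v) : (u+s, v+s) ∈ R(a,b) for some s ∈ A} is a congruence on A, and R(a,b) ⊆ {(a,b)}^c ⊆ R(a,b)₊, where {(a,b)}^c is the congruence generated by the single pair (a,b). -/
import Mathlib


/-- `ρ` is a congruence on the commutative semiring `A`. -/
def IsCong {A : Type*} [CommSemiring A] (ρ : Set (A × A)) : Prop :=
  (∀ a : A, (a, a) ∈ ρ) ∧
  (∀ a b : A, (a, b) ∈ ρ → (b, a) ∈ ρ) ∧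
  (∀ a b c : A, (a, b) ∈ ρ → (b, c) ∈ ρ → (a, c) ∈ ρ) ∧
  (∀ a b c d : A, (a, b) ∈ ρ → (c, d) ∈ ρ → (a + c, b + d) ∈ ρ) ∧
  (∀ a b c d : A, (a, b) ∈ ρ → (c, d) ∈ ρ → (a * c, b * d) ∈ ρ)

/-- The congruence generated by a relation `R`: the smallest congruence containing `R`. -/
def conGenS {A : Type*} [CommSemiring A] (R : Set (A × A)) : Set (A × A) :=
  ⋂₀ {σ | IsCong σ ∧ R ⊆ σ}

/-- `σ₊ = {(u,v) : (u+s, v+s) ∈ σ for some s}`. -/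
def plusPart {A : Type*} [CommSemiring A] (σ : Set (A × A)) : Set (A × A) :=
  {p | ∃ s : A, (p.1 + s, p.2 + s) ∈ σ}

/-- `R(a,b) = {(ax+by+z, bx+ay+z) : x,y,z ∈ A}`. -/
def Rab {A : Type*} [CommSemiring A] (a b : A) : Set (A × A) :=
  {p | ∃ x y z : A, p = (a * x + b * y + z, b * x + a * y + z)}

lemma mem_pp {A : Type*} [CommSemiring A] (a b u v : A) :
    (u, v) ∈ plusPart (Rab a b) ↔
    ∃ x y w : A, u + (b * x + a * y) + w = v + (a * x + b * y) + w := by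
  constructor
  · rintro ⟨s, x, y, z, h⟩
    rw [Prod.mk.injEq] at h
    obtain ⟨h1, h2⟩ := h
    refine ⟨x, y, s, ?_⟩
    calc u + (b * x + a * y) + s = (u + s) + (b * x + a * y) := by ring
      _ = (a * x + b * y + z) + (b * x + a * y) := by rw [h1]
      _ = (b * x + a * y + z) + (a * x + b * y) := by ring
      _ = (v + s) + (a * x + b * y) := by rw [h2]
      _ = v + (a * x + b * y) + s := by ring
  · rintro ⟨x, y, w, h⟩
    refine ⟨b * x + a * y + w, x, y, v + w, ?_⟩
    rw [Prod.mk.injEq]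
    constructor
    · calc u + (b * x + a * y + w) = u + (b * x + a * y) + w := by ring
        _ = v + (a * x + b * y) + w := h
        _ = a * x + b * y + (v + w) := by ring
    · ring

lemma pp_isCong {A : Type*} [CommSemiring A] (a b : A) :
    IsCong (plusPart (Rab a b)) := by
  refine ⟨?_, ?_, ?_, ?_, ?_⟩
  · intro u
    rw [mem_pp]
    exact ⟨0, 0, 0, by ring⟩
  · intro u v h
    rw [mem_pp] at h ⊢
    obtain ⟨x, y, w, h⟩ := h
    refine ⟨y, x, w, ?_⟩
    calc v + (b * y + a * x) + w = v + (a * x + b * y) + w := by ring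
      _ = u + (b * x + a * y) + w := h.symm
      _ = u + (a * y + b * x) + w := by ring
  · intro u v t h1 h2
    rw [mem_pp] at h1 h2 ⊢
    obtain ⟨x1, y1, w1, h1⟩ := h1
    obtain ⟨x2, y2, w2, h2⟩ := h2
    refine ⟨x1 + x2, y1 + y2, v + w1 + w2, ?_⟩
    calc u + (b * (x1 + x2) + a * (y1 + y2)) + (v + w1 + w2)
        = (u + (b * x1 + a * y1) + w1) + (v + (b * x2 + a * y2) + w2) := by ring
      _ = (v + (a * x1 + b * y1) + w1) + (t + (a * x2 + b * y2) + w2) := by rw [h1, h2]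
      _ = t + (a * (x1 + x2) + b * (y1 + y2)) + (v + w1 + w2) := by ring
  · intro u1 v1 u2 v2 h1 h2
    rw [mem_pp] at h1 h2 ⊢
    obtain ⟨x1, y1, w1, h1⟩ := h1
    obtain ⟨x2, y2, w2, h2⟩ := h2
    refine ⟨x1 + x2, y1 + y2, w1 + w2, ?_⟩
    calc u1 + u2 + (b * (x1 + x2) + a * (y1 + y2)) + (w1 + w2)
        = (u1 + (b * x1 + a * y1) + w1) + (u2 + (b * x2 + a * y2) + w2) := by ring
      _ = (v1 + (a * x1 + b * y1) + w1) + (v2 + (a * x2 + b * y2) + w2) := by rw [h1, h2]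
      _ = v1 + v2 + (a * (x1 + x2) + b * (y1 + y2)) + (w1 + w2) := by ring
  · intro u1 v1 u2 v2 h1 h2
    rw [mem_pp] at h1 h2 ⊢
    obtain ⟨x1, y1, w1, h1⟩ := h1
    obtain ⟨x2, y2, w2, h2⟩ := h2
    refine ⟨x1 * u2 + v1 * x2, y1 * u2 + v1 * y2, w1 * u2 + v1 * w2 + v1 * u2, ?_⟩
    calc u1 * u2 + (b * (x1 * u2 + v1 * x2) + a * (y1 * u2 + v1 * y2))
          + (w1 * u2 + v1 * w2 + v1 * u2)
        = (u1 + (b * x1 + a * y1) + w1) * u2 + v1 * (u2 + (b * x2 + a * y2) + w2) := by ring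
      _ = (v1 + (a * x1 + b * y1) + w1) * u2 + v1 * (v2 + (a * x2 + b * y2) + w2) := by
          rw [h1, h2]
      _ = v1 * v2 + (a * (x1 * u2 + v1 * x2) + b * (y1 * u2 + v1 * y2))
          + (w1 * u2 + v1 * w2 + v1 * u2) := by ring

/-- `R(a,b)₊` is a congruence on `A`, and
`R(a,b) ⊆ {(a,b)}^c ⊆ R(a,b)₊`. -/
theorem Rab_plusPart_isCong {A : Type*} [CommSemiring A] (a b : A) :
    IsCong (plusPart (Rab a b)) ∧
      Rab a b ⊆ conGenS {(a, b)} ∧ conGenS {(a, b)} ⊆ plusPart (Rab a b) := by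
  refine ⟨pp_isCong a b, ?_, ?_⟩
  · rintro ⟨u, v⟩ ⟨x, y, z, h⟩
    rw [Prod.mk.injEq] at h
    obtain ⟨h1, h2⟩ := h
    intro σ hσ
    obtain ⟨⟨refl, symm, _, add, mul⟩, hab⟩ := hσ
    have hab' : (a, b) ∈ σ := hab rfl
    have h3 : (a * x, b * x) ∈ σ := mul a b x x hab' (refl x)
    have h4 : (b * y, a * y) ∈ σ := mul b a y y (symm a b hab') (refl y)
    subst h1 h2
    exact add _ _ z z (add _ _ _ _ h3 h4) (refl z)
  · intro p hp
    exact hp (plusPart (Rab a b)) ⟨pp_isCong a b,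
      by rintro q rfl; exact (mem_pp a b a b).2 ⟨1, 0, 0, by ring⟩⟩
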